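/- Let L : (-∞, 0) → ℝ be locally Lipschitz and bounded from above. Then for every ε > 0 there exists t₀ ∈ (-∞, 0) such that L is differentiable at t₀, L'(t₀) ≥ -ε, and L(t₀) > sup_{t ∈ (-∞,0)} L(t) - ε. -/

import Mathlib

open Set MeasureTheory Filter Topology ENNReal

lemma stieltjes_abscont {g : ℝ → ℝ} (hg : Monotone g) (hcont : Continuous g)
    (C : NNReal) (hgrow : ∀ a b : ℝ, a ≤ b → g b - g a ≤ C * (b - a)) :
    hg.stieltjesFunction.measure ≪ (volume : Measure ℝ) := by
  set G := hg.stieltjesFunction with hG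
  have hGg : ∀ x, G x = g x := by
    intro x
    rw [hG, hg.stieltjesFunction_eq]
    exact rightLim_eq_of_tendsto
      ((hcont.tendsto x).mono_left nhdsWithin_le_nhds)
  set D : ℝ≥0∞ := (C : ℝ≥0∞) + 1 with hD
  have hD0 : D ≠ 0 := by simp [hD]
  have hDtop : D ≠ ∞ := by simp [hD]
  have hlen : ∀ t : Set ℝ, G.length t ≤ D * StieltjesFunction.id.length t := by
    intro t
    rw [StieltjesFunction.length_eq, StieltjesFunction.length_eq,
      ENNReal.mul_iInf_of_ne hD0 hDtop]
    refine iInf_mono fun a => ?_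
    rw [ENNReal.mul_iInf_of_ne hD0 hDtop]
    refine iInf_mono fun b => ?_
    rw [ENNReal.mul_iInf_of_ne hD0 hDtop]
    refine iInf_mono fun hab => ?_
    have hid : StieltjesFunction.id b - StieltjesFunction.id a = b - a := rfl
    rw [hGg, hGg, hid]
    rcases le_or_gt a b with h | h
    · calc ENNReal.ofReal (g b - g a) ≤ ENNReal.ofReal (((C:ℝ)+1) * (b - a)) := by
            refine ENNReal.ofReal_le_ofReal ?_
            have := hgrow a b h
            nlinarith [sub_nonneg.2 h, C.coe_nonneg]
          _ = D * ENNReal.ofReal (b - a) := by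
            rw [ENNReal.ofReal_mul (by positivity)]
            congr 1
            rw [hD]
            simp [ENNReal.ofReal_add, ENNReal.ofReal_coe_nnreal]
    · have : g b - g a ≤ 0 := sub_nonpos.2 (hg h.le)
      simp [ENNReal.ofReal_eq_zero.2 this]
  have houter : ∀ s : Set ℝ, G.outer s ≤ D * StieltjesFunction.id.outer s := by
    intro s
    have h1 : (D • StieltjesFunction.id.outer) s
        = OuterMeasure.ofFunction (D • StieltjesFunction.id.length)
          (by simp [StieltjesFunction.length_empty]) s := by
      rw [← OuterMeasure.smul_ofFunction hDtop]
      rfl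
    have h2 : G.outer ≤ OuterMeasure.ofFunction (D • StieltjesFunction.id.length)
        (by simp [StieltjesFunction.length_empty]) := by
      rw [OuterMeasure.le_ofFunction]
      intro u
      exact (G.outer_le_length u).trans (hlen u)
    calc G.outer s ≤ _ := h2 s
      _ = (D • StieltjesFunction.id.outer) s := h1.symm
      _ = D * StieltjesFunction.id.outer s := rfl
  refine Measure.AbsolutelyContinuous.mk fun s hs hvol => ?_
  have hmeas : ∀ (f : StieltjesFunction ℝ) (u : Set ℝ), f.measure u = f.outer u := by
    intro f u
    rw [StieltjesFunction.measure_def]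
    rfl
  have hvol' : StieltjesFunction.id.outer s = 0 := by
    rw [← hmeas, ← Real.volume_eq_stieltjes_id]
    exact hvol
  rw [hmeas]
  refine le_antisymm ?_ zero_le
  calc G.outer s ≤ D * StieltjesFunction.id.outer s := houter s
    _ = 0 := by rw [hvol']; simp

lemma lip_bound {f : ℝ → ℝ} {K : NNReal} (hf : LipschitzWith K f) (a b : ℝ) (hab : a ≤ b) :
    |f b - f a| ≤ K * (b - a) := by
  have h := hf.dist_le_mul b a
  rw [Real.dist_eq, Real.dist_eq] at h
  have h2 : |b - a| = b - a := abs_of_nonneg (by linarith)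
  rwa [h2] at h

lemma slope_bound {f : ℝ → ℝ} {K : NNReal} (hf : LipschitzWith K f) {p q c : ℝ}
    (hpq : p < q) (H : ∀ t ∈ Ioo p q, DifferentiableAt ℝ f t → deriv f t < c) :
    f q - f p ≤ c * (q - p) := by
  set g : ℝ → ℝ := fun t => f t + K * t with hgdef
  have hmono : Monotone g := fun a b hab => by
    have h := abs_le.1 (lip_bound hf a b hab)
    simp only [hgdef]
    nlinarith
  have hcontf : Continuous f := hf.continuous
  have hcont : Continuous g := by fun_prop
  have hgrow : ∀ a b : ℝ, a ≤ b → g b - g a ≤ ((2 * K : NNReal) : ℝ) * (b - a) := by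
    intro a b hab
    have h := abs_le.1 (lip_bound hf a b hab)
    have : ((2 * K : NNReal) : ℝ) = 2 * (K : ℝ) := by push_cast; ring
    rw [this]
    simp only [hgdef]
    nlinarith [K.coe_nonneg, sub_nonneg.2 hab]
  set μ := hmono.stieltjesFunction.measure with hμ
  have hac : μ ≪ (volume : Measure ℝ) := stieltjes_abscont hmono hcont _ hgrow
  set D : ℝ → ℝ≥0∞ := μ.rnDeriv volume with hDdef
  have hae1 : ∀ᵐ x, HasDerivAt g (D x).toReal x := hmono.ae_hasDerivAt
  have hae2 : ∀ᵐ x, DifferentiableAt ℝ f x := hf.ae_differentiableAt_of_real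
  have hae3 : ∀ᵐ x, D x < ∞ := Measure.rnDeriv_lt_top μ volume
  have key : ∀ᵐ x, x ∈ Ioo p q → ((D x).toReal = deriv f x + K ∧ D x < ∞) := by
    filter_upwards [hae1, hae2, hae3] with x h1 h2 h3 hx
    have hg' : HasDerivAt g (deriv f x + K) x := by
      exact (h2.hasDerivAt.add ((hasDerivAt_id x).const_mul (K : ℝ))).congr_deriv (by simp)
    exact ⟨h1.unique hg', h3⟩
  -- there is at least one good point in Ioo p q, giving 0 ≤ c + K
  have hcK : 0 ≤ c + (K : ℝ) := by
    have hpos : (volume (Ioo p q)) ≠ 0 := by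
      simp [Real.volume_Ioo, hpq, sub_pos.2 hpq]
    obtain ⟨x, hx, hxg⟩ : ∃ x ∈ Ioo p q, ((D x).toReal = deriv f x + K ∧ D x < ∞)
        ∧ DifferentiableAt ℝ f x := by
      by_contra hcon
      push_neg at hcon
      have : Ioo p q ⊆ {x | ¬ ((x ∈ Ioo p q → ((D x).toReal = deriv f x + K ∧ D x < ∞))
          ∧ DifferentiableAt ℝ f x)} := by
        intro x hx hmem
        exact hcon x hx (hmem.1 hx) hmem.2
      have h0 : volume {x : ℝ | ¬ ((x ∈ Ioo p q → ((D x).toReal = deriv f x + K ∧ D x < ∞))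
          ∧ DifferentiableAt ℝ f x)} = 0 := by
        have := key.and hae2
        rwa [ae_iff] at this
      exact hpos (measure_mono_null this h0)
    have h1 : 0 ≤ (D x).toReal := ENNReal.toReal_nonneg
    have h2 : deriv f x < c := H x hx hxg.2
    have h3 : (D x).toReal = deriv f x + K := hxg.1.1
    linarith [h3 ▸ h1]
  have hGg : ∀ x, hmono.stieltjesFunction x = g x := by
    intro x
    rw [hmono.stieltjesFunction_eq]
    exact rightLim_eq_of_tendsto
      ((hcont.tendsto x).mono_left nhdsWithin_le_nhds)
  have hGcoe : ⇑hmono.stieltjesFunction = g := funext hGg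
  have hIoo : μ (Ioo p q) = ENNReal.ofReal (g q - g p) := by
    rw [hμ, StieltjesFunction.measure_Ioo]
    congr 1
    have hll : Function.leftLim (⇑hmono.stieltjesFunction) q = g q := by
      rw [hGcoe]
      exact leftLim_eq_of_tendsto
        ((hcont.tendsto q).mono_left nhdsWithin_le_nhds)
    rw [hll, hGg]
  have hwd : volume.withDensity D = μ := Measure.withDensity_rnDeriv_eq μ volume hac
  have h1 : μ (Ioo p q) = ∫⁻ x in Ioo p q, D x ∂volume := by
    rw [← hwd, withDensity_apply _ measurableSet_Ioo]
  have h2 : ∫⁻ x in Ioo p q, D x ∂volume ≤ ∫⁻ _ in Ioo p q, ENNReal.ofReal (c + K) ∂volume := by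
    apply lintegral_mono_ae
    filter_upwards [ae_restrict_mem measurableSet_Ioo, ae_restrict_of_ae key,
      ae_restrict_of_ae hae2] with x hx hkey hdiff
    obtain ⟨heq, hlt⟩ := hkey hx
    have hb : (D x).toReal ≤ c + K := by
      have := H x hx hdiff
      rw [heq]; linarith
    calc D x = ENNReal.ofReal (D x).toReal := (ENNReal.ofReal_toReal hlt.ne).symm
      _ ≤ ENNReal.ofReal (c + K) := ENNReal.ofReal_le_ofReal hb
  have h3 : ∫⁻ _ in Ioo p q, ENNReal.ofReal (c + K) ∂volume
      = ENNReal.ofReal (c + K) * ENNReal.ofReal (q - p) := by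
    rw [setLIntegral_const, Real.volume_Ioo]
  have h4 : ENNReal.ofReal (g q - g p) ≤ ENNReal.ofReal ((c + K) * (q - p)) := by
    rw [ENNReal.ofReal_mul hcK, ← hIoo, h1]
    exact h2.trans h3.le
  have h6 : (0:ℝ) ≤ (c + K) * (q - p) := mul_nonneg hcK (by linarith)
  have h5 : g q - g p ≤ (c + K) * (q - p) := (ENNReal.ofReal_le_ofReal_iff h6).1 h4
  simp only [hgdef] at h5
  nlinarith [sub_nonneg.2 hpq.le]

lemma slope_bound_on {L : ℝ → ℝ} {K : NNReal} {a b : ℝ} (hab : a < b)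
    (hL : LipschitzOnWith K L (Icc a b)) {c : ℝ}
    (H : ∀ t ∈ Ioo a b, DifferentiableAt ℝ L t → deriv L t < c) :
    L b - L a ≤ c * (b - a) := by
  obtain ⟨g, hg, hEq⟩ := hL.extend_real
  have hEq' : ∀ x ∈ Icc a b, L x = g x := fun x hx => hEq hx
  have H' : ∀ t ∈ Ioo a b, DifferentiableAt ℝ g t → deriv g t < c := by
    intro t ht hdiff
    have hev : g =ᶠ[nhds t] L := by
      filter_upwards [isOpen_Ioo.mem_nhds ht] with y hy
      exact (hEq' y (Ioo_subset_Icc_self hy)).symm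
    have hdiffL : DifferentiableAt ℝ L t := hdiff.congr_of_eventuallyEq hev.symm
    have := hev.deriv_eq
    rw [this]
    exact H t ht hdiffL
  have := slope_bound hg hab H'
  rwa [← hEq' a (left_mem_Icc.2 hab.le), ← hEq' b (right_mem_Icc.2 hab.le)] at this

/-- `f` is locally Lipschitz on the set `s`: every point of `s` has a neighborhood
within `s` on which `f` is Lipschitz. -/
def LocallyLipschitzOnSet (f : ℝ → ℝ) (s : Set ℝ) : Prop :=
  ∀ x ∈ s, ∃ K : NNReal, ∃ u ∈ nhdsWithin x s, LipschitzOnWith K f u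

lemma step (L : ℝ → ℝ) (hlip : LocallyLipschitzOnSet L (Set.Iio 0))
    (S ε : ℝ) (hε : 0 < ε)
    (hbad : ∀ t ∈ Set.Iio (0:ℝ), DifferentiableAt ℝ L t → L t > S - ε → deriv L t < -ε)
    {m : ℝ} (hm : m < 0) (hval : L m > S - ε/2) :
    ∃ δ > 0, ∀ u ∈ Ico (m - δ) m, L m - L u ≤ -ε * (m - u) := by
  obtain ⟨K, U, hU, lip⟩ := hlip m hm
  rw [isOpen_Iio.nhdsWithin_eq hm] at hU
  obtain ⟨r, hr, hball⟩ := Metric.mem_nhds_iff.1 hU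
  set δ := min (r/2) (ε/(2*((K:ℝ)+1))) with hδdef
  have hK1 : (0:ℝ) < (K:ℝ) + 1 := by positivity
  have hδpos : 0 < δ := by
    apply lt_min (by linarith)
    positivity
  have hδr : δ < r := (min_le_left _ _).trans_lt (by linarith)
  have hδε : (K:ℝ) * δ < ε/2 := by
    have h1 : δ ≤ ε/(2*((K:ℝ)+1)) := min_le_right _ _
    have h2 : (K:ℝ) * δ ≤ (K:ℝ) * (ε/(2*((K:ℝ)+1))) :=
      mul_le_mul_of_nonneg_left h1 K.coe_nonneg
    have h3 : (K:ℝ) * (ε/(2*((K:ℝ)+1))) < ε/2 := by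
      rw [mul_div_assoc']
      rw [div_lt_div_iff₀ (by positivity) (by norm_num)]
      nlinarith [K.coe_nonneg]
    linarith
  have hwin : Icc (m - δ) m ⊆ U := by
    intro t ht
    apply hball
    rw [Metric.mem_ball, Real.dist_eq]
    have : |t - m| ≤ δ := by
      rw [abs_le]
      constructor <;> [linarith [ht.1]; linarith [ht.2]]
    linarith
  have hval' : ∀ t ∈ Icc (m - δ) m, L t > S - ε := by
    intro t ht
    have h1 : dist (L t) (L m) ≤ (K:ℝ) * dist t m :=
      lip.dist_le_mul t (hwin ht) m (hwin ⟨by linarith, le_rfl⟩)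
    rw [Real.dist_eq, Real.dist_eq] at h1
    have h2 : |t - m| ≤ δ := by
      rw [abs_le]
      constructor <;> [linarith [ht.1]; linarith [ht.2]]
    have h3 : |L t - L m| ≤ (K:ℝ) * δ :=
      h1.trans (mul_le_mul_of_nonneg_left h2 K.coe_nonneg)
    have h4 := (abs_le.1 h3).1
    linarith
  refine ⟨δ, hδpos, fun u hu => ?_⟩
  have hum : u < m := hu.2
  have hlipuse : LipschitzOnWith K L (Icc u m) := by
    apply lip.mono
    intro t ht
    exact hwin ⟨by linarith [hu.1, ht.1], ht.2⟩
  have H : ∀ t ∈ Ioo u m, DifferentiableAt ℝ L t → deriv L t < -ε := by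
    intro t ht hdiff
    apply hbad t (by linarith [ht.2] : t < 0) hdiff
    exact hval' t ⟨by linarith [hu.1, ht.1.le], ht.2.le⟩
  have := slope_bound_on hum hlipuse H
  linarith [this]

/-- Let `L : (-∞, 0) → ℝ` be locally Lipschitz and bounded from above.
Then for every `ε > 0` there exists `t₀ ∈ (-∞, 0)` such that `L` is differentiable at `t₀`,
`L'(t₀) ≥ -ε`, and `L(t₀) > sup_{t ∈ (-∞,0)} L(t) - ε`. -/
theorem stmt0 (L : ℝ → ℝ)
    (hlip : LocallyLipschitzOnSet L (Set.Iio (0 : ℝ)))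
    (hbdd : BddAbove (L '' Set.Iio (0 : ℝ)))
    (ε : ℝ) (hε : 0 < ε) :
    ∃ t₀ ∈ Set.Iio (0 : ℝ), DifferentiableAt ℝ L t₀ ∧
      deriv L t₀ ≥ -ε ∧ L t₀ > sSup (L '' Set.Iio (0 : ℝ)) - ε := by
  set S := sSup (L '' Set.Iio (0:ℝ)) with hSdef
  by_contra hcon
  push_neg at hcon
  have hbad : ∀ t ∈ Set.Iio (0:ℝ), DifferentiableAt ℝ L t → L t > S - ε → deriv L t < -ε := by
    intro t ht hd hv
    by_contra h
    push_neg at h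
    exact absurd (hcon t ht hd h) (not_le.2 hv)
  have hne : (L '' Set.Iio (0:ℝ)).Nonempty := ⟨L (-1), ⟨-1, by norm_num, rfl⟩⟩
  have hLle : ∀ t ∈ Set.Iio (0:ℝ), L t ≤ S := fun t ht => le_csSup hbdd ⟨t, ht, rfl⟩
  obtain ⟨y, hy, hygt⟩ := exists_lt_of_lt_csSup hne (show S - ε/2 < S by linarith)
  obtain ⟨a₀, ha₀, rfl⟩ := hy
  have hct : ∀ m ∈ Set.Iio (0:ℝ), ContinuousAt L m := by
    intro m hm
    obtain ⟨K, U, hU, lip⟩ := hlip m hm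
    rw [isOpen_Iio.nhdsWithin_eq hm] at hU
    exact lip.continuousOn.continuousAt hU
  set X := {t : ℝ | t ≤ a₀ ∧ ∀ u ∈ Icc t a₀, L a₀ + ε * (a₀ - u) ≤ L u} with hX
  have ha₀X : a₀ ∈ X := ⟨le_rfl, fun u hu => by
    have : u = a₀ := le_antisymm hu.2 hu.1
    simp [this]⟩
  have hXbd : ∀ t ∈ X, a₀ - (S - L a₀)/ε ≤ t := by
    intro t ht
    by_contra hc
    push_neg at hc
    have h1 := ht.2 t ⟨le_rfl, ht.1⟩
    have h2 : L t ≤ S := hLle t (lt_of_le_of_lt ht.1 ha₀)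
    have h3 : (S - L a₀)/ε < a₀ - t := by linarith
    have h4 : ε * ((S - L a₀)/ε) < ε * (a₀ - t) := mul_lt_mul_of_pos_left h3 hε
    rw [mul_div_cancel₀ _ hε.ne'] at h4
    linarith
  set m := sInf X with hm
  have hXne : X.Nonempty := ⟨a₀, ha₀X⟩
  have hXbdd : BddBelow X := ⟨a₀ - (S - L a₀)/ε, fun t ht => hXbd t ht⟩
  have hmle : m ≤ a₀ := csInf_le hXbdd ha₀X
  have hm0 : m < 0 := lt_of_le_of_lt hmle ha₀
  have hprop : ∀ u ∈ Ioc m a₀, L a₀ + ε * (a₀ - u) ≤ L u := by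
    intro u hu
    obtain ⟨t, htX, htu⟩ := exists_lt_of_csInf_lt hXne hu.1
    exact htX.2 u ⟨htu.le, hu.2⟩
  have hpm : L a₀ + ε * (a₀ - m) ≤ L m := by
    rcases eq_or_lt_of_le hmle with heq | hlt
    · rw [heq]; simp
    · have h1 : Tendsto L (𝓝[>] m) (𝓝 (L m)) :=
        ((hct m hm0).tendsto).mono_left nhdsWithin_le_nhds
      have h2 : Tendsto (fun u => L a₀ + ε * (a₀ - u)) (𝓝[>] m)
          (𝓝 (L a₀ + ε * (a₀ - m))) := by
        apply Tendsto.mono_left _ nhdsWithin_le_nhds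
        exact (tendsto_const_nhds.add (((tendsto_const_nhds.sub tendsto_id).const_mul ε)))
      apply le_of_tendsto_of_tendsto h2 h1
      filter_upwards [Ioo_mem_nhdsGT_of_mem ⟨le_rfl, hlt⟩] with u hu
      exact hprop u ⟨hu.1, hu.2.le⟩
  have hvalm : L m > S - ε/2 := by
    have : 0 ≤ ε * (a₀ - m) := mul_nonneg hε.le (by linarith)
    linarith
  obtain ⟨δ, hδ, hstep⟩ := step L hlip S ε hε hbad hm0 hvalm
  have hmem : m - δ ∈ X := by
    constructor
    · linarith
    · intro u hu
      rcases le_or_gt m u with h | h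
      · rcases eq_or_lt_of_le h with heq | hlt
        · rw [← heq]; exact hpm
        · exact hprop u ⟨hlt, hu.2⟩
      · have h1 := hstep u ⟨hu.1, h⟩
        have h2 : ε * (a₀ - u) = ε * (a₀ - m) + ε * (m - u) := by ring
        nlinarith [hpm]
  have := csInf_le hXbdd hmem
  linarith
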